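/- Let R → R' be a faithfully flat homomorphism of commutative rings, and let I_R = ker(w_0 : W(R) → R), I_{R'} = ker(w_0 : W(R') → R'). Then the sequence 0 → I_R → I_{R'} ⇉ I_{R'⊗_R R'} is exact, where the two parallel maps are induced by the two canonical ring maps R' → R' ⊗_R R'. -/

import Mathlib

open WittVector TensorProduct

section Amitsur
variable (R R' : Type) [CommRing R] [CommRing R'] [Algebra R R']

noncomputable def dmap : R' →ₗ[R] R' ⊗[R] R' :=
  (Algebra.TensorProduct.includeLeft : R' →ₐ[R] R' ⊗[R] R').toLinearMap -
  (Algebra.TensorProduct.includeRight : R' →ₐ[R] R' ⊗[R] R').toLinearMap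

noncomputable def Gmap : R' ⊗[R] (R' ⊗[R] R') →ₗ[R] R' ⊗[R] R' :=
  (LinearMap.rTensor R' (LinearMap.mul' R R')) ∘ₗ
    ((TensorProduct.assoc R R' R' R').symm : R' ⊗[R] (R' ⊗[R] R') →ₗ[R] (R' ⊗[R] R') ⊗[R] R')

lemma key_identity (z : R' ⊗[R] R') :
    Gmap R R' ((dmap R R').lTensor R' z)
      = (LinearMap.mul' R R' z) ⊗ₜ[R] (1 : R') - z := by
  induction z using TensorProduct.induction_on with
  | zero => simp
  | tmul a b =>
      simp [Gmap, dmap, tmul_sub, sub_tmul, mul_comm]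
  | add x y hx hy =>
      rw [map_add, map_add, hx, hy, map_add, add_tmul]
      abel

lemma amitsur_exact [Module.FaithfullyFlat R R'] :
    Function.Exact (Algebra.linearMap R R') (dmap R R') := by
  apply Module.FaithfullyFlat.lTensor_reflects_exact R R'
  intro z
  constructor
  · intro hz
    refine ⟨(LinearMap.mul' R R' z) ⊗ₜ[R] (1 : R), ?_⟩
    have h := key_identity R R' z
    rw [hz, map_zero] at h
    have h2 : z = (LinearMap.mul' R R' z) ⊗ₜ[R] (1 : R') := by
      rw [eq_comm, ← sub_eq_zero, eq_comm] at h; linear_combination h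
    rw [h2]
    simp [LinearMap.lTensor_tmul]
  · rintro ⟨w, rfl⟩
    rw [← LinearMap.comp_apply, ← LinearMap.lTensor_comp]
    have hcomp : (dmap R R') ∘ₗ (Algebra.linearMap R R') = 0 := by
      ext r
      simp [dmap, Algebra.algebraMap_eq_smul_one, ← smul_tmul, smul_tmul']
    rw [hcomp]
    simp

lemma amitsur_inj [Module.FaithfullyFlat R R'] :
    Function.Injective (algebraMap R R') := by
  rw [injective_iff_map_eq_zero]
  intro r hr
  have h0 : (LinearMap.toSpanSingleton R R r) = 0 := by
    apply (Module.FaithfullyFlat.zero_iff_lTensor_zero R R' _).mpr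
    ext a
    show (LinearMap.lTensor R' (LinearMap.toSpanSingleton R R r)) (a ⊗ₜ[R] 1) = 0
    rw [LinearMap.lTensor_tmul, LinearMap.toSpanSingleton_apply, one_smul,
      show a ⊗ₜ[R] r = r • (a ⊗ₜ[R] (1:R)) by rw [smul_tmul', smul_tmul]; simp,
      smul_tmul', Algebra.smul_def, hr]
    simp
  simpa using congrFun (congrArg DFunLike.coe h0) 1
end Amitsur


/-- If `R → R'` is faithfully flat and `I_R = ker (w₀ : W(R) → R)`, then the
sequence `0 → I_R → I_{R'} ⇉ I_{R' ⊗_R R'}` is exact: the map `I_R → I_{R'}` is injective,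
and an element of `I_{R'}` on which the two canonical maps to `I_{R' ⊗_R R'}` agree comes
from a unique element of `I_R`. -/
theorem stmt_8 (p : ℕ) [hp : Fact p.Prime] (R R' : Type) [CommRing R] [CommRing R']
    [Algebra R R'] [Module.FaithfullyFlat R R'] :
    (∀ y y' : WittVector p R, constantCoeff y = 0 → constantCoeff y' = 0 →
        WittVector.map (algebraMap R R') y = WittVector.map (algebraMap R R') y' → y = y') ∧
    ∀ x : WittVector p R', constantCoeff x = 0 →
      WittVector.map (Algebra.TensorProduct.includeLeftRingHom : R' →+* R' ⊗[R] R') x =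
        WittVector.map (Algebra.TensorProduct.includeRight : R' →ₐ[R] R' ⊗[R] R').toRingHom x →
      ∃ y : WittVector p R, constantCoeff y = 0 ∧ WittVector.map (algebraMap R R') y = x := by
  have hinj := amitsur_inj R R'
  constructor
  · intro y y' _ _ h
    ext n
    apply hinj
    simpa only [WittVector.map_coeff] using congrArg (fun w => w.coeff n) h
  · intro x hx hmaps
    have hd : ∀ n : ℕ, ∃ r : R, algebraMap R R' r = x.coeff n := by
      intro n
      have hc : Algebra.TensorProduct.includeLeftRingHom (R := R) (x.coeff n)
          = (Algebra.TensorProduct.includeRight : R' →ₐ[R] R' ⊗[R] R') (x.coeff n) := by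
        simpa only [WittVector.map_coeff, AlgHom.toRingHom_eq_coe, AlgHom.coe_toRingHom] using congrArg (fun w => w.coeff n) hmaps
      have h0 : dmap R R' (x.coeff n) = 0 := by
        simp only [dmap, LinearMap.sub_apply, AlgHom.toLinearMap_apply, sub_eq_zero]
        exact hc
      obtain ⟨r, hr⟩ := (amitsur_exact R R' (x.coeff n)).mp h0
      exact ⟨r, hr⟩
    choose r hr using hd
    refine ⟨WittVector.mk p r, ?_, ?_⟩
    · show r 0 = 0
      apply hinj
      rw [hr 0, map_zero]
      show x.coeff 0 = 0
      exact hx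
    · ext n
      rw [WittVector.map_coeff]
      exact hr n
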